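/- Let e⁰, e¹, e², e³ ∈ V with (e¹,e²,e³) a basis of V, and let F^{KL} ∈ Λ²V for K, L ∈ {0,1,2,3} with F^{KL} = −F^{LK}. If Σ_{J,K} η_{JK}·F^{IK}∧e^J = 0 in Λ³V for every I (i.e. F^I{}_J∧e^J = 0), then for every I: Σ_{J,K,L} P_{IJKL}·e^J∧F^{KL} = (1/2)·Σ_{J,K,L} ε_{IJKL}·e^J∧F^{KL}. In other words, when the algebraic Bianchi-type identity F^I{}_J∧e^J = 0 holds, the γ-dependent part of P drops out of the constraint P_{IJKL}e^J∧F^{KL}, which therefore coincides with the Immirzi-parameter-independent expression (1/2)ε_{IJKL}e^J∧F^{KL}. -/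

import Mathlib

open ExteriorAlgebra

noncomputable section

/-- 4-index Levi-Civita symbol on `Fin 4`, normalized so that `ε₀₁₂₃ = 1`. -/
def lc4 (I J K L : Fin 4) : ℝ :=
  ((J.val : ℝ) - (I.val : ℝ)) * ((K.val : ℝ) - (I.val : ℝ)) * ((L.val : ℝ) - (I.val : ℝ)) *
    ((K.val : ℝ) - (J.val : ℝ)) * ((L.val : ℝ) - (J.val : ℝ)) * ((L.val : ℝ) - (K.val : ℝ)) / 12

/-- Internal metric `η = diag(ε,1,1,1) = η⁻¹`. -/
def etaM (ep : ℝ) (I J : Fin 4) : ℝ := if I = J then (if I = 0 then ep else 1) else 0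

/-- The tensor `P_{IJKL} = (1/2)(ε_{IJKL} + (ε/γ)(η_{IK}η_{JL} − η_{JK}η_{IL}))`. -/
def Pt (ep γ : ℝ) (I J K L : Fin 4) : ℝ :=
  (1 / 2) * (lc4 I J K L + (ep / γ) * (etaM ep I K * etaM ep J L - etaM ep J K * etaM ep I L))


lemma eta_sum {M : Type*} [AddCommGroup M] [Module ℝ M] (ep : ℝ) (I : Fin 4)
    (m : Fin 4 → M) :
    ∑ K : Fin 4, (if I = K then (if I = 0 then ep else 1) else 0) • m K
      = (if I = 0 then ep else 1) • m I := by
  rw [Finset.sum_eq_single I]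
  · simp
  · intro b _ hb; simp [Ne.symm hb]
  · simp

lemma two_form_comm {V : Type*} [AddCommGroup V] [Module ℝ V]
    {x : ExteriorAlgebra ℝ V}
    (hx : x ∈ (LinearMap.range (ExteriorAlgebra.ι ℝ : V →ₗ[ℝ] ExteriorAlgebra ℝ V) ^ 2 :
      Submodule ℝ (ExteriorAlgebra ℝ V)))
    (v : V) : ExteriorAlgebra.ι ℝ v * x = x * ExteriorAlgebra.ι ℝ v := by
  rw [pow_two] at hx
  refine Submodule.mul_induction_on hx ?_ ?_
  · rintro _ ⟨a, rfl⟩ _ ⟨c, rfl⟩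
    have h1 : ι ℝ v * ι ℝ a = -(ι ℝ a * ι ℝ v) := by
      have := ι_add_mul_swap (R := ℝ) v a; linear_combination (norm := noncomm_ring) this
    have h2 : ι ℝ v * ι ℝ c = -(ι ℝ c * ι ℝ v) := by
      have := ι_add_mul_swap (R := ℝ) v c; linear_combination (norm := noncomm_ring) this
    calc ι ℝ v * (ι ℝ a * ι ℝ c) = (ι ℝ v * ι ℝ a) * ι ℝ c := by rw [mul_assoc]
    _ = -(ι ℝ a * (ι ℝ v * ι ℝ c)) := by rw [h1]; noncomm_ring
    _ = ι ℝ a * ι ℝ c * ι ℝ v := by rw [h2]; noncomm_ring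
  · intro a c ha hc; rw [mul_add, add_mul, ha, hc]

theorem stmt_17 (V : Type*) [AddCommGroup V] [Module ℝ V] (b : Module.Basis (Fin 3) ℝ V) (e0 : V)
    (ep γ : ℝ) (hep : ep = 1 ∨ ep = -1) (hγ : γ ≠ 0)
    (F : Fin 4 → Fin 4 → ExteriorAlgebra ℝ V)
    (hF2 : ∀ K L : Fin 4, F K L ∈
      (LinearMap.range (ExteriorAlgebra.ι ℝ : V →ₗ[ℝ] ExteriorAlgebra ℝ V) ^ 2 :
        Submodule ℝ (ExteriorAlgebra ℝ V)))
    (hFa : ∀ K L : Fin 4, F K L = -F L K)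
    (hBianchi : ∀ I : Fin 4, ∑ J : Fin 4, ∑ K : Fin 4,
      etaM ep J K •
        (F I K * ExteriorAlgebra.ι ℝ ((Fin.cons e0 fun i => b i : Fin 4 → V) J)) = 0) :
    ∀ I : Fin 4,
      ∑ J : Fin 4, ∑ K : Fin 4, ∑ L : Fin 4,
          Pt ep γ I J K L •
            (ExteriorAlgebra.ι ℝ ((Fin.cons e0 fun i => b i : Fin 4 → V) J) * F K L) =
        ∑ J : Fin 4, ∑ K : Fin 4, ∑ L : Fin 4,
          ((1 / 2) * lc4 I J K L) •
            (ExteriorAlgebra.ι ℝ ((Fin.cons e0 fun i => b i : Fin 4 → V) J) * F K L) := by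
  intro I
  set e : Fin 4 → ExteriorAlgebra ℝ V :=
    fun J => ExteriorAlgebra.ι ℝ ((Fin.cons e0 fun i => b i : Fin 4 → V) J) with he
  have hd : ∀ J, etaM ep J J = if J = 0 then ep else 1 := by intro J; simp [etaM]
  -- commute e J with F K L
  have hc : ∀ J K L, e J * F K L = F K L * e J := fun J K L => two_form_comm (hF2 K L) _
  -- key vanishing
  have key : ∑ J : Fin 4, ∑ K : Fin 4, ∑ L : Fin 4,
      (etaM ep I K * etaM ep J L - etaM ep J K * etaM ep I L) • (e J * F K L) = 0 := by
    have S1 : ∀ J : Fin 4, ∑ K : Fin 4, ∑ L : Fin 4,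
        (etaM ep I K * etaM ep J L) • (e J * F K L)
        = (if I = 0 then ep else 1) • ∑ L : Fin 4, etaM ep J L • (e J * F I L) := by
      intro J
      have : ∀ K : Fin 4, ∑ L : Fin 4, (etaM ep I K * etaM ep J L) • (e J * F K L)
          = etaM ep I K • ∑ L : Fin 4, etaM ep J L • (e J * F K L) := by
        intro K; rw [Finset.smul_sum]; simp [mul_smul]
      rw [Finset.sum_congr rfl fun K _ => this K]
      simpa [etaM] using eta_sum ep I (fun K => ∑ L : Fin 4, etaM ep J L • (e J * F K L))
    have S2 : ∀ J : Fin 4, ∑ K : Fin 4, ∑ L : Fin 4,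
        (etaM ep J K * etaM ep I L) • (e J * F K L)
        = -((if I = 0 then ep else 1) • ∑ K : Fin 4, etaM ep J K • (e J * F I K)) := by
      intro J
      rw [Finset.sum_comm]
      have : ∀ L : Fin 4, ∑ K : Fin 4, (etaM ep J K * etaM ep I L) • (e J * F K L)
          = etaM ep I L • ∑ K : Fin 4, etaM ep J K • (e J * F K L) := by
        intro L; rw [Finset.smul_sum]
        refine Finset.sum_congr rfl fun K _ => ?_
        rw [mul_comm, mul_smul]
      rw [Finset.sum_congr rfl fun L _ => this L]
      rw [show (∑ L : Fin 4, etaM ep I L • ∑ K : Fin 4, etaM ep J K • (e J * F K L))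
          = (if I = 0 then ep else 1) • ∑ K : Fin 4, etaM ep J K • (e J * F K I) by
        simpa [etaM] using eta_sum ep I (fun L => ∑ K : Fin 4, etaM ep J K • (e J * F K L))]
      rw [← smul_neg, ← Finset.sum_neg_distrib]
      congr 1
      refine Finset.sum_congr rfl fun K _ => ?_
      rw [hFa K I, mul_neg, smul_neg]
    have step : ∀ J : Fin 4, ∑ K : Fin 4, ∑ L : Fin 4,
        (etaM ep I K * etaM ep J L - etaM ep J K * etaM ep I L) • (e J * F K L)
        = (2 * (if I = 0 then ep else 1)) • ∑ K : Fin 4, etaM ep J K • (F I K * e J) := by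
      intro J
      have expand : ∑ K : Fin 4, ∑ L : Fin 4,
          (etaM ep I K * etaM ep J L - etaM ep J K * etaM ep I L) • (e J * F K L)
          = (∑ K : Fin 4, ∑ L : Fin 4, (etaM ep I K * etaM ep J L) • (e J * F K L))
            - ∑ K : Fin 4, ∑ L : Fin 4, (etaM ep J K * etaM ep I L) • (e J * F K L) := by
        rw [← Finset.sum_sub_distrib]
        refine Finset.sum_congr rfl fun K _ => ?_
        rw [← Finset.sum_sub_distrib]
        refine Finset.sum_congr rfl fun L _ => ?_
        rw [sub_smul]
      rw [expand, S1 J, S2 J, sub_neg_eq_add, ← two_smul ℝ, smul_smul]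
      congr 1
      refine Finset.sum_congr rfl fun K _ => ?_
      rw [hc]
    rw [Finset.sum_congr rfl fun J _ => step J, ← Finset.smul_sum,
      show (∑ J : Fin 4, ∑ K : Fin 4, etaM ep J K • (F I K * e J)) = 0 from hBianchi I,
      smul_zero]
  -- now split Pt
  have split : ∀ J K L : Fin 4, Pt ep γ I J K L • (e J * F K L)
      = ((1 / 2) * lc4 I J K L) • (e J * F K L)
        + (ep / (2 * γ)) • ((etaM ep I K * etaM ep J L - etaM ep J K * etaM ep I L)
            • (e J * F K L)) := by
    intro J K L
    rw [smul_smul, ← add_smul]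
    congr 1
    unfold Pt
    field_simp
  calc ∑ J : Fin 4, ∑ K : Fin 4, ∑ L : Fin 4, Pt ep γ I J K L • (e J * F K L)
      = (∑ J : Fin 4, ∑ K : Fin 4, ∑ L : Fin 4, ((1 / 2) * lc4 I J K L) • (e J * F K L))
        + (ep / (2 * γ)) • ∑ J : Fin 4, ∑ K : Fin 4, ∑ L : Fin 4,
            (etaM ep I K * etaM ep J L - etaM ep J K * etaM ep I L) • (e J * F K L) := by
        rw [Finset.smul_sum, ← Finset.sum_add_distrib]
        refine Finset.sum_congr rfl fun J _ => ?_
        rw [Finset.smul_sum, ← Finset.sum_add_distrib]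
        refine Finset.sum_congr rfl fun K _ => ?_
        rw [Finset.smul_sum, ← Finset.sum_add_distrib]
        exact Finset.sum_congr rfl fun L _ => split J K L
    _ = ∑ J : Fin 4, ∑ K : Fin 4, ∑ L : Fin 4, ((1 / 2) * lc4 I J K L) • (e J * F K L) := by
        rw [key, smul_zero, add_zero]

end
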